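/- Let g(θ) = h(θ) - z(θ) where h(θ) = -θ log₂ θ - (1-θ) log₂(1-θ) and z(θ) = 2√(θ(1-θ)). Then the third derivative g'''(θ) ≤ 0 for θ ∈ (0, 1/2), i.e., g' is concave on (0,1/2); moreover g(0) = g(1/2) = 0 and g(θ) ≤ 0 on [0,1/2]. -/

import Mathlib

open Real Set

noncomputable def gf1 (θ : ℝ) : ℝ :=
  (Real.log (1 - θ) - Real.log θ) / Real.log 2 - (1 - 2*θ) / Real.sqrt (θ * (1 - θ))

noncomputable def gf2 (θ : ℝ) : ℝ :=
  -(1 / (Real.log 2 * (θ * (1 - θ)))) + 1 / (2 * ((θ * (1 - θ)) * Real.sqrt (θ * (1 - θ))))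

noncomputable def gf3 (θ : ℝ) : ℝ :=
  (1 - 2*θ) / (Real.log 2 * (θ * (1 - θ))^2)
    - 3 * (1 - 2*θ) / (4 * ((θ * (1 - θ))^2 * Real.sqrt (θ * (1 - θ))))

lemma hasDerivAt_sq' {θ : ℝ} : HasDerivAt (fun x : ℝ => x * (1 - x)) (1 - 2*θ) θ := by
  have h : HasDerivAt (fun x : ℝ => x * (1 - x)) (1 * (1-θ) + θ * (0 - 1)) θ :=
    (hasDerivAt_id θ).mul ((hasDerivAt_const θ 1).sub (hasDerivAt_id θ))
  convert h using 1; ring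

lemma hasDerivAt_sqrt_s {θ : ℝ} (hθ : θ ∈ Ioo (0:ℝ) 1) :
    HasDerivAt (fun x : ℝ => Real.sqrt (x * (1-x)))
      ((1 - 2*θ) / (2 * Real.sqrt (θ*(1-θ)))) θ := by
  have hs : 0 < θ * (1 - θ) := mul_pos hθ.1 (by linarith [hθ.2])
  have h := (Real.hasDerivAt_sqrt (ne_of_gt hs)).comp θ hasDerivAt_sq'
  refine h.congr_deriv ?_
  field_simp

lemma hasDerivAt_g (g : ℝ → ℝ)
    (hg : g = fun θ =>
      (-θ * Real.logb 2 θ - (1 - θ) * Real.logb 2 (1 - θ)) -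
        2 * Real.sqrt (θ * (1 - θ)))
    {θ : ℝ} (hθ : θ ∈ Ioo (0:ℝ) 1) : HasDerivAt g (gf1 θ) θ := by
  obtain ⟨h0, h1⟩ := hθ
  have h1' : 0 < 1 - θ := by linarith
  have hs : 0 < θ * (1 - θ) := mul_pos h0 h1'
  have hr : 0 < Real.sqrt (θ * (1 - θ)) := Real.sqrt_pos.2 hs
  have hl2 : (0:ℝ) < Real.log 2 := Real.log_pos (by norm_num)
  have hg' : g = fun x => (-(x * Real.log x) - ((1-x) * Real.log (1-x))) / Real.log 2
      - 2 * Real.sqrt (x * (1-x)) := by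
    rw [hg]; funext x; rw [Real.logb, Real.logb]; ring
  rw [hg']
  have hA : HasDerivAt (fun x : ℝ => x * Real.log x) (Real.log θ + 1) θ :=
    Real.hasDerivAt_mul_log (ne_of_gt h0)
  have hB : HasDerivAt (fun x : ℝ => (1-x) * Real.log (1-x))
      ((Real.log (1-θ) + 1) * (0 - 1)) θ := by
    have := (Real.hasDerivAt_mul_log (ne_of_gt h1')).comp θ
      ((hasDerivAt_const θ (1:ℝ)).sub (hasDerivAt_id θ))
    simpa [Function.comp_def] using this
  have h := ((hA.neg.sub hB).div_const (Real.log 2)).sub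
    ((hasDerivAt_sqrt_s ⟨h0, h1⟩).const_mul 2)
  refine h.congr_deriv ?_
  rw [gf1]
  field_simp
  ring

lemma hasDerivAt_gf1 {θ : ℝ} (hθ : θ ∈ Ioo (0:ℝ) 1) : HasDerivAt gf1 (gf2 θ) θ := by
  obtain ⟨h0, h1⟩ := hθ
  have h1' : 0 < 1 - θ := by linarith
  have hs : 0 < θ * (1 - θ) := mul_pos h0 h1'
  have hr : 0 < Real.sqrt (θ * (1 - θ)) := Real.sqrt_pos.2 hs
  have hr2 : Real.sqrt (θ * (1 - θ)) ^ 2 = θ * (1 - θ) := Real.sq_sqrt hs.le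
  have hl2 : (0:ℝ) < Real.log 2 := Real.log_pos (by norm_num)
  have hA : HasDerivAt (fun x : ℝ => Real.log (1 - x)) ((1-θ)⁻¹ * (0 - 1)) θ := by
    have := (Real.hasDerivAt_log (ne_of_gt h1')).comp θ
      ((hasDerivAt_const θ (1:ℝ)).sub (hasDerivAt_id θ))
    simpa [Function.comp_def] using this
  have hB : HasDerivAt (fun x : ℝ => Real.log x) θ⁻¹ θ := Real.hasDerivAt_log (ne_of_gt h0)
  have hnum : HasDerivAt (fun x : ℝ => 1 - 2*x) (0 - 2*1) θ :=
    (hasDerivAt_const θ (1:ℝ)).sub ((hasDerivAt_id θ).const_mul 2)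
  have hq := (hnum.div (hasDerivAt_sqrt_s ⟨h0, h1⟩) (ne_of_gt hr))
  have h := ((hA.sub hB).div_const (Real.log 2)).sub hq
  have heq : ∀ x, gf1 x = (Real.log (1 - x) - Real.log x) / Real.log 2
      - (1 - 2*x) / Real.sqrt (x * (1 - x)) := fun x => rfl
  rw [show gf1 = fun x => (Real.log (1 - x) - Real.log x) / Real.log 2
      - (1 - 2*x) / Real.sqrt (x * (1 - x)) from rfl]
  refine h.congr_deriv ?_
  rw [gf2]
  set r := Real.sqrt (θ * (1 - θ)) with hrdef
  have h4 : (1-2*θ)^2 = 1 - 4*(r^2) := by rw [hr2]; ring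
  have hA' : ((1-θ)⁻¹*(0-1) - θ⁻¹)/Real.log 2 = -(1/(Real.log 2*(θ*(1-θ)))) := by
    field_simp; ring
  have hB' : ((0-2*1)*r - (1-2*θ)*((1-2*θ)/(2*r)))/r^2 = -(1/(2*((θ*(1-θ))*r))) := by
    rw [← hr2]
    field_simp
    linear_combination (-4) * hr2
  rw [hA', hB']
  ring

lemma hasDerivAt_gf2 {θ : ℝ} (hθ : θ ∈ Ioo (0:ℝ) 1) : HasDerivAt gf2 (gf3 θ) θ := by
  obtain ⟨h0, h1⟩ := hθ
  have h1' : 0 < 1 - θ := by linarith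
  have hs : 0 < θ * (1 - θ) := mul_pos h0 h1'
  have hr : 0 < Real.sqrt (θ * (1 - θ)) := Real.sqrt_pos.2 hs
  have hr2 : Real.sqrt (θ * (1 - θ)) ^ 2 = θ * (1 - θ) := Real.sq_sqrt hs.le
  have hl2 : (0:ℝ) < Real.log 2 := Real.log_pos (by norm_num)
  have hD1 : HasDerivAt (fun x : ℝ => Real.log 2 * (x * (1 - x)))
      (Real.log 2 * (1 - 2*θ)) θ := hasDerivAt_sq'.const_mul _
  have hD2 : HasDerivAt (fun x : ℝ => 2 * ((x * (1 - x)) * Real.sqrt (x * (1 - x))))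
      (2 * ((1 - 2*θ) * Real.sqrt (θ*(1-θ)) +
        (θ * (1 - θ)) * ((1 - 2*θ) / (2 * Real.sqrt (θ*(1-θ)))))) θ :=
    (hasDerivAt_sq'.mul (hasDerivAt_sqrt_s ⟨h0, h1⟩)).const_mul 2
  have hT1 := ((hasDerivAt_const θ (1:ℝ)).div hD1 (by positivity)).neg
  have hT2 := (hasDerivAt_const θ (1:ℝ)).div hD2 (by positivity)
  have h := hT1.add hT2
  rw [show gf2 = fun x => -(1 / (Real.log 2 * (x * (1 - x))))
      + 1 / (2 * ((x * (1 - x)) * Real.sqrt (x * (1 - x)))) from rfl]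
  refine h.congr_deriv ?_
  rw [gf3]
  set r := Real.sqrt (θ * (1 - θ)) with hrdef
  set L := Real.log 2 with hLdef
  have e1 : -((0 * (L * (θ * (1 - θ))) - 1 * (L * (1 - 2*θ))) / (L * (θ * (1 - θ)))^2)
      = (1 - 2*θ) / (L * (θ * (1 - θ))^2) := by
    field_simp
    ring
  have e2 : (0 * (2 * ((θ * (1 - θ)) * r)) - 1 * (2 * ((1 - 2*θ) * r + (θ * (1 - θ)) * ((1 - 2*θ) / (2 * r)))))
      / (2 * ((θ * (1 - θ)) * r))^2 = -(3 * (1 - 2*θ) / (4 * ((θ * (1 - θ))^2 * r))) := by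
    rw [← hr2]
    field_simp
    ring
  rw [← e1, e2]
  ring

lemma sqrt_s_le_half {θ : ℝ} (h0 : 0 < θ) (h2 : θ < 1/2) :
    Real.sqrt (θ * (1 - θ)) ≤ 1/2 := by
  rw [show (1:ℝ)/2 = Real.sqrt ((1/2)^2) by rw [Real.sqrt_sq]; norm_num]
  apply Real.sqrt_le_sqrt
  nlinarith

lemma gf3_nonpos {θ : ℝ} (hθ : θ ∈ Ioo (0:ℝ) (1/2)) : gf3 θ ≤ 0 := by
  obtain ⟨h0, h2⟩ := hθ
  have h1' : 0 < 1 - θ := by linarith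
  have hs : 0 < θ * (1 - θ) := mul_pos h0 h1'
  have hr : 0 < Real.sqrt (θ * (1 - θ)) := Real.sqrt_pos.2 hs
  have hl2 : (0.6931471803:ℝ) < Real.log 2 := Real.log_two_gt_d9
  have hrle := sqrt_s_le_half h0 h2
  rw [gf3, sub_nonpos]
  rw [div_le_div_iff₀ (by positivity) (by positivity)]
  have hA : 0 < (1 - 2*θ) * (θ * (1 - θ))^2 := mul_pos (by linarith) (pow_pos hs 2)
  have hB : (0:ℝ) < 3 * Real.log 2 - 4 * Real.sqrt (θ * (1 - θ)) := by nlinarith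
  nlinarith [mul_pos hA hB]

lemma gf2_nonpos {θ : ℝ} (h0 : 0 < θ) (h1 : θ < 1)
    (hge : Real.log 2 ≤ 2 * Real.sqrt (θ * (1 - θ))) : gf2 θ ≤ 0 := by
  have hs : 0 < θ * (1 - θ) := mul_pos h0 (by linarith)
  have hr : 0 < Real.sqrt (θ * (1 - θ)) := Real.sqrt_pos.2 hs
  have hl2 : (0:ℝ) < Real.log 2 := Real.log_pos (by norm_num)
  have key : 1 / (2 * ((θ * (1 - θ)) * Real.sqrt (θ * (1 - θ))))
      ≤ 1 / (Real.log 2 * (θ * (1 - θ))) :=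
    one_div_le_one_div_of_le (by positivity) (by nlinarith)
  rw [gf2]; linarith

lemma gf2_nonneg {θ : ℝ} (h0 : 0 < θ) (h1 : θ < 1)
    (hle : 2 * Real.sqrt (θ * (1 - θ)) ≤ Real.log 2) : 0 ≤ gf2 θ := by
  have hs : 0 < θ * (1 - θ) := mul_pos h0 (by linarith)
  have hr : 0 < Real.sqrt (θ * (1 - θ)) := Real.sqrt_pos.2 hs
  have hl2 : (0:ℝ) < Real.log 2 := Real.log_pos (by norm_num)
  have key : 1 / (Real.log 2 * (θ * (1 - θ)))
      ≤ 1 / (2 * ((θ * (1 - θ)) * Real.sqrt (θ * (1 - θ)))) :=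
    one_div_le_one_div_of_le (by positivity) (by nlinarith)
  rw [gf2]; linarith

noncomputable def tstar : ℝ := (1 - Real.sqrt (1 - Real.log 2 ^ 2)) / 2

lemma log2_lt_one : Real.log 2 < 1 := by
  have := Real.log_two_lt_d9; linarith

lemma tstar_mem : tstar ∈ Ioo (0:ℝ) (1/2) := by
  have hl2 : (0:ℝ) < Real.log 2 := Real.log_pos (by norm_num)
  have h1 : 0 < 1 - Real.log 2 ^ 2 := by nlinarith [log2_lt_one]
  have h2 : 1 - Real.log 2 ^ 2 < 1 := by nlinarith
  have hu0 : 0 < Real.sqrt (1 - Real.log 2 ^ 2) := Real.sqrt_pos.2 h1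
  have hu1 : Real.sqrt (1 - Real.log 2 ^ 2) < 1 := by
    have := Real.sqrt_lt_sqrt h1.le h2
    simpa using this
  constructor <;> [skip; skip] <;> rw [tstar] <;> linarith

lemma tstar_mul : tstar * (1 - tstar) = Real.log 2 ^ 2 / 4 := by
  have h1 : 0 ≤ 1 - Real.log 2 ^ 2 := by nlinarith [log2_lt_one, Real.log_pos (show (1:ℝ)<2 by norm_num)]
  have hu2 : Real.sqrt (1 - Real.log 2 ^ 2) ^ 2 = 1 - Real.log 2 ^ 2 := Real.sq_sqrt h1
  rw [tstar]
  linear_combination (-1/4 : ℝ) * hu2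

lemma two_sqrt_le {θ : ℝ} (h0 : 0 < θ) (ht : θ ≤ tstar) :
    2 * Real.sqrt (θ * (1 - θ)) ≤ Real.log 2 := by
  have hl2 : (0:ℝ) < Real.log 2 := Real.log_pos (by norm_num)
  obtain ⟨ht0, ht2⟩ := tstar_mem
  have hsle : θ * (1 - θ) ≤ Real.log 2 ^ 2 / 4 := by
    rw [← tstar_mul]; nlinarith
  have := Real.sqrt_le_sqrt hsle
  rw [show Real.log 2 ^ 2 / 4 = (Real.log 2 / 2)^2 by ring,
    Real.sqrt_sq (by positivity)] at this
  linarith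

lemma le_two_sqrt {θ : ℝ} (ht : tstar ≤ θ) (h2 : θ ≤ 1/2) :
    Real.log 2 ≤ 2 * Real.sqrt (θ * (1 - θ)) := by
  have hl2 : (0:ℝ) < Real.log 2 := Real.log_pos (by norm_num)
  obtain ⟨ht0, ht2⟩ := tstar_mem
  have hsle : Real.log 2 ^ 2 / 4 ≤ θ * (1 - θ) := by
    rw [← tstar_mul]; nlinarith
  have := Real.sqrt_le_sqrt hsle
  rw [show Real.log 2 ^ 2 / 4 = (Real.log 2 / 2)^2 by ring,
    Real.sqrt_sq (by positivity)] at this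
  linarith

lemma g_cont (g : ℝ → ℝ)
    (hg : g = fun θ =>
      (-θ * Real.logb 2 θ - (1 - θ) * Real.logb 2 (1 - θ)) -
        2 * Real.sqrt (θ * (1 - θ))) : Continuous g := by
  have hg' : g = fun x => (-(x * Real.log x) - ((1-x) * Real.log (1-x))) / Real.log 2
      - 2 * Real.sqrt (x * (1-x)) := by
    rw [hg]; funext x; rw [Real.logb, Real.logb]; ring
  rw [hg']
  have h1 : Continuous fun x : ℝ => x * Real.log x := Real.continuous_mul_log
  have h2 : Continuous fun x : ℝ => (1-x) * Real.log (1-x) :=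
    h1.comp (continuous_const.sub continuous_id)
  have h3 : Continuous fun x : ℝ => Real.sqrt (x * (1-x)) :=
    Real.continuous_sqrt.comp (continuous_id.mul (continuous_const.sub continuous_id))
  exact ((h1.neg.sub h2).div_const _).sub (continuous_const.mul h3)

lemma gf1_half : gf1 (1/2) = 0 := by
  rw [gf1]; norm_num

theorem g_third_deriv_nonpos_and_g_nonpos
    (g : ℝ → ℝ)
    (hg : g = fun θ =>
      (-θ * Real.logb 2 θ - (1 - θ) * Real.logb 2 (1 - θ)) -
        2 * Real.sqrt (θ * (1 - θ))) :
    (∀ θ ∈ Set.Ioo (0:ℝ) (1/2), deriv (deriv (deriv g)) θ ≤ 0) ∧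
    ConcaveOn ℝ (Set.Ioo (0:ℝ) (1/2)) (deriv g) ∧
    g 0 = 0 ∧ g (1/2) = 0 ∧
    ∀ θ ∈ Set.Icc (0:ℝ) (1/2), g θ ≤ 0 := by
  have hcont := g_cont g hg
  have hsub : Ioo (0:ℝ) (1/2) ⊆ Ioo (0:ℝ) 1 := fun x hx => ⟨hx.1, by linarith [hx.2]⟩
  have hd1 : ∀ θ ∈ Ioo (0:ℝ) 1, deriv g θ = gf1 θ := fun θ h => (hasDerivAt_g g hg h).deriv
  have hev1 : ∀ θ ∈ Ioo (0:ℝ) 1, deriv g =ᶠ[nhds θ] gf1 := fun θ h =>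
    Filter.eventuallyEq_of_mem (isOpen_Ioo.mem_nhds h) hd1
  have hD2 : ∀ θ ∈ Ioo (0:ℝ) 1, HasDerivAt (deriv g) (gf2 θ) θ := fun θ h =>
    (hasDerivAt_gf1 h).congr_of_eventuallyEq (hev1 θ h)
  have hd2 : ∀ θ ∈ Ioo (0:ℝ) 1, deriv (deriv g) θ = gf2 θ := fun θ h => (hD2 θ h).deriv
  have hev2 : ∀ θ ∈ Ioo (0:ℝ) 1, deriv (deriv g) =ᶠ[nhds θ] gf2 := fun θ h =>
    Filter.eventuallyEq_of_mem (isOpen_Ioo.mem_nhds h) hd2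
  have hD3 : ∀ θ ∈ Ioo (0:ℝ) 1, HasDerivAt (deriv (deriv g)) (gf3 θ) θ := fun θ h =>
    (hasDerivAt_gf2 h).congr_of_eventuallyEq (hev2 θ h)
  have hd3 : ∀ θ ∈ Ioo (0:ℝ) 1, deriv (deriv (deriv g)) θ = gf3 θ := fun θ h => (hD3 θ h).deriv
  -- part 1
  have part1 : ∀ θ ∈ Set.Ioo (0:ℝ) (1/2), deriv (deriv (deriv g)) θ ≤ 0 := by
    intro θ h
    rw [hd3 θ (hsub h)]
    exact gf3_nonpos h
  -- part 2
  have part2 : ConcaveOn ℝ (Set.Ioo (0:ℝ) (1/2)) (deriv g) := by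
    apply concaveOn_of_hasDerivWithinAt2_nonpos (convex_Ioo _ _) (f' := gf2) (f'' := gf3)
    · exact fun x hx => ((hD2 x (hsub hx)).continuousAt).continuousWithinAt
    · intro x hx
      exact (hD2 x (hsub (by rwa [interior_Ioo] at hx))).hasDerivWithinAt
    · intro x hx
      exact (hasDerivAt_gf2 (hsub (by rwa [interior_Ioo] at hx))).hasDerivWithinAt
    · intro x hx
      exact gf3_nonpos (by rwa [interior_Ioo] at hx)
  -- part 3
  have hg0 : g 0 = 0 := by rw [hg]; simp
  -- part 4
  have hl2ne : Real.log 2 ≠ 0 := ne_of_gt (Real.log_pos (by norm_num))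
  have h14 : Real.sqrt ((1:ℝ)/2 * (1 - 1/2)) = 1/2 := by
    rw [show (1:ℝ)/2*(1-1/2) = (1/2)^2 by norm_num, Real.sqrt_sq (by norm_num)]
  have hghalf : g (1/2) = 0 := by
    rw [hg]
    simp only
    rw [h14]
    rw [show Real.logb 2 (1 - 1/2) = Real.logb 2 (1/2) by norm_num,
      show Real.logb 2 ((1:ℝ)/2) = -1 by
        rw [one_div, Real.logb_inv, Real.logb_self_eq_one (by norm_num)]]
    ring
  -- part 5
  obtain ⟨ht0, ht2⟩ := tstar_mem
  have hmemIoo : ∀ x ∈ Icc tstar (1/2), x ∈ Ioo (0:ℝ) 1 :=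
    fun x hx => ⟨lt_of_lt_of_le ht0 hx.1, by linarith [hx.2]⟩
  have hant : AntitoneOn gf1 (Icc tstar (1/2)) := by
    apply antitoneOn_of_deriv_nonpos (convex_Icc _ _)
    · exact fun x hx => (hasDerivAt_gf1 (hmemIoo x hx)).continuousAt.continuousWithinAt
    · intro x hx
      rw [interior_Icc] at hx
      exact (hasDerivAt_gf1 (hmemIoo x (Ioo_subset_Icc_self hx))).differentiableAt.differentiableWithinAt
    · intro x hx
      rw [interior_Icc] at hx
      have hx1 := hmemIoo x (Ioo_subset_Icc_self hx)
      rw [(hasDerivAt_gf1 hx1).deriv]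
      exact gf2_nonpos hx1.1 hx1.2 (le_two_sqrt hx.1.le hx.2.le)
  have h12mem : (1:ℝ)/2 ∈ Icc tstar (1/2) := ⟨ht2.le, le_refl _⟩
  have hgf1nonneg : ∀ x ∈ Icc tstar (1/2), 0 ≤ gf1 x := by
    intro x hx
    have := hant hx h12mem hx.2
    rwa [gf1_half] at this
  have hmono : MonotoneOn g (Icc tstar (1/2)) := by
    apply monotoneOn_of_deriv_nonneg (convex_Icc _ _) hcont.continuousOn
    · intro x hx
      rw [interior_Icc] at hx
      exact (hasDerivAt_g g hg (hmemIoo x (Ioo_subset_Icc_self hx))).differentiableAt.differentiableWithinAt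
    · intro x hx
      rw [interior_Icc] at hx
      rw [hd1 x (hmemIoo x (Ioo_subset_Icc_self hx))]
      exact hgf1nonneg x (Ioo_subset_Icc_self hx)
  have hright : ∀ θ ∈ Icc tstar (1/2), g θ ≤ 0 := by
    intro θ hθ
    have := hmono hθ h12mem hθ.2
    rwa [hghalf] at this
  have hconv : ConvexOn ℝ (Icc (0:ℝ) tstar) g := by
    have hmem' : ∀ x ∈ Ioo (0:ℝ) tstar, x ∈ Ioo (0:ℝ) 1 :=
      fun x hx => ⟨hx.1, by linarith [hx.2]⟩
    apply convexOn_of_deriv2_nonneg (convex_Icc _ _) hcont.continuousOn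
    · intro x hx
      rw [interior_Icc] at hx
      exact (hasDerivAt_g g hg (hmem' x hx)).differentiableAt.differentiableWithinAt
    · intro x hx
      rw [interior_Icc] at hx
      exact (hD2 x (hmem' x hx)).differentiableAt.differentiableWithinAt
    · intro x hx
      rw [interior_Icc] at hx
      have hx1 := hmem' x hx
      have h2 : deriv^[2] g x = deriv (deriv g) x := by
        simp only [Function.iterate_succ, Function.iterate_zero, Function.comp_apply, id_eq]
      rw [h2, hd2 x hx1]
      exact gf2_nonneg hx1.1 hx1.2 (two_sqrt_le hx.1 hx.2.le)
  have hleft : ∀ θ ∈ Icc (0:ℝ) tstar, g θ ≤ 0 := by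
    intro θ hθ
    have hts : g tstar ≤ 0 := hright tstar ⟨le_refl _, ht2.le⟩
    set t := θ / tstar with htdef
    have ht : 0 ≤ t := div_nonneg hθ.1 ht0.le
    have ht1 : t ≤ 1 := (div_le_one ht0).2 hθ.2
    have hcomb := hconv.2
      (⟨le_refl _, ht0.le⟩ : (0:ℝ) ∈ Icc (0:ℝ) tstar)
      (⟨ht0.le, le_refl _⟩ : tstar ∈ Icc (0:ℝ) tstar)
      (show (0:ℝ) ≤ 1 - t by linarith) ht (by ring : (1 - t) + t = 1)
    have harg : (1-t) • (0:ℝ) + t • tstar = θ := by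
      simp only [smul_eq_mul, mul_zero, zero_add, htdef]
      field_simp
    rw [harg, hg0] at hcomb
    simp only [smul_eq_mul, mul_zero, zero_add] at hcomb
    nlinarith
  refine ⟨part1, part2, hg0, hghalf, ?_⟩
  intro θ hθ
  rcases le_or_gt θ tstar with h | h
  · exact hleft θ ⟨hθ.1, h⟩
  · exact hright θ ⟨h.le, hθ.2⟩
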